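/- Let G be a countable group acting by isometries on a metric space (X, d), let x ∈ X, and let μ be a probability measure on G with finite first moment, i.e., ∫_G d(x, g·x) dμ(g) < ∞. Then there exists a constant L ≥ 0 such that for μ^{⊗ℕ}-almost every sequence (g_n)_{n ≥ 1} of independent μ-distributed elements of G, the limit lim_{n → ∞} d(x, g₁g₂⋯g_n·x)/n exists and equals L. -/

import Mathlib

set_option linter.unusedSectionVars false
set_option linter.unusedVariables false
set_option maxHeartbeats 1000000

open MeasureTheory ProbabilityTheory Filter

namespace LinearDriftAux



/-! ### real sequence helpers -/

/-- liminf is unchanged by a perturbation tending to 0. -/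
lemma liminf_congr_sub {u v : ℕ → ℝ} (h : Tendsto (fun n => u n - v n) atTop (nhds 0)) :
    liminf u atTop = liminf v atTop := by
  have key : ∀ {a b : ℕ → ℝ}, Tendsto (fun n => a n - b n) atTop (nhds 0) →
      ∀ c ∈ {c : ℝ | ∀ᶠ n in atTop, c ≤ a n}, ∀ ε > 0, c - ε ∈ {c : ℝ | ∀ᶠ n in atTop, c ≤ b n} := by
    intro a b hab c hc ε hε
    have h1 : ∀ᶠ n in atTop, |a n - b n| < ε := by
      have := hab.eventually (eventually_abs_sub_lt 0 hε)
      simpa using this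
    filter_upwards [hc, h1] with n h2 h3
    have := abs_lt.1 h3
    linarith [this.2]
  rw [liminf_eq, liminf_eq]
  set Su := {c : ℝ | ∀ᶠ n in atTop, c ≤ u n}
  set Sv := {c : ℝ | ∀ᶠ n in atTop, c ≤ v n}
  have h' : Tendsto (fun n => v n - u n) atTop (nhds 0) := by
    have := h.neg; simpa using this
  by_cases hbu : BddAbove Su <;> by_cases hbv : BddAbove Sv
  · by_cases hne : Su.Nonempty
    · have hnev : Sv.Nonempty := by
        obtain ⟨c, hc⟩ := hne
        exact ⟨c - 1, key h c hc 1 one_pos⟩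
      apply le_antisymm
      · apply csSup_le hne
        intro c hc
        have : ∀ ε > 0, c - ε ≤ sSup Sv := fun ε hε => le_csSup hbv (key h c hc ε hε)
        by_contra hlt
        push_neg at hlt
        have := this ((c - sSup Sv)/2) (by linarith)
        linarith
      · apply csSup_le hnev
        intro c hc
        have : ∀ ε > 0, c - ε ≤ sSup Su := fun ε hε => le_csSup hbu (key h' c hc ε hε)
        by_contra hlt
        push_neg at hlt
        have := this ((c - sSup Su)/2) (by linarith)
        linarith
    · have hnev : ¬ Sv.Nonempty := by
        intro ⟨c, hc⟩
        exact hne ⟨c - 1, key h' c hc 1 one_pos⟩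
      rw [Set.not_nonempty_iff_eq_empty] at hne hnev
      rw [hne, hnev]
  · exfalso; apply hbv
    obtain ⟨M, hM⟩ := hbu
    refine ⟨M + 1, fun c hc => ?_⟩
    have := hM (key h' c hc 1 one_pos)
    linarith
  · exfalso; apply hbu
    obtain ⟨M, hM⟩ := hbv
    refine ⟨M + 1, fun c hc => ?_⟩
    have := hM (key h c hc 1 one_pos)
    linarith
  · rw [Real.sSup_of_not_bddAbove hbu, Real.sSup_of_not_bddAbove hbv]

/-- `⌊n/k⌋ → ∞`. -/
lemma tendsto_nat_div_atTop {k : ℕ} (hk : 0 < k) :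
    Tendsto (fun n : ℕ => n / k) atTop atTop := by
  apply tendsto_atTop_atTop.2
  intro b
  refine ⟨b * k, fun n hn => ?_⟩
  exact (Nat.le_div_iff_mul_le hk).2 hn



variable {G X Ω : Type*} [Group G] [MetricSpace X] [MulAction G X]

/-- The partial product `g (k) ⋯ g (k+n-1)`. -/
def wlk (g : ℕ → Ω → G) (k n : ℕ) (ω : Ω) : G :=
  (List.ofFn (fun i : Fin n => g (k + i) ω)).prod

/-- The block of increments. -/
def blk (g : ℕ → Ω → G) (k n : ℕ) (ω : Ω) : Fin n → G := fun i => g (k + i) ω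

/-- The distance functional on blocks. -/
def fdist (x : X) (n : ℕ) : (Fin n → G) → ℝ := fun v => dist x ((List.ofFn v).prod • x)

/-- The quantity `d(x, g_k ⋯ g_{k+n-1} x)`. -/
def am (x : X) (g : ℕ → Ω → G) (k n : ℕ) (ω : Ω) : ℝ := dist x (wlk g k n ω • x)

lemma am_eq_comp (x : X) (g : ℕ → Ω → G) (k n : ℕ) :
    am x g k n = fdist x n ∘ blk g k n := rfl

lemma am_nonneg (x : X) (g : ℕ → Ω → G) (k n : ℕ) (ω : Ω) : 0 ≤ am x g k n ω := dist_nonneg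

lemma wlk_zero (g : ℕ → Ω → G) (k : ℕ) (ω : Ω) : wlk g k 0 ω = 1 := rfl

lemma am_zero (x : X) (g : ℕ → Ω → G) (k : ℕ) (ω : Ω) : am x g k 0 ω = 0 := by
  simp [am, wlk_zero, one_smul]

lemma wlk_one (g : ℕ → Ω → G) (k : ℕ) (ω : Ω) : wlk g k 1 ω = g k ω := by
  simp [wlk]

lemma am_one (x : X) (g : ℕ → Ω → G) (k : ℕ) (ω : Ω) :
    am x g k 1 ω = dist x (g k ω • x) := by
  simp [am, wlk_one]

lemma wlk_add (g : ℕ → Ω → G) (k n m : ℕ) (ω : Ω) :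
    wlk g k (n + m) ω = wlk g k n ω * wlk g (k + n) m ω := by
  unfold wlk
  rw [List.ofFn_add, List.prod_append]
  have h1 : (fun i : Fin n => g (k + (Fin.castLE (Nat.le_add_right n m) i : ℕ)) ω) = fun i : Fin n => g (k + i) ω := by
    funext i; congr 1
  have h2 : (fun j : Fin m => g (k + (Fin.natAdd n j : ℕ)) ω) = fun j : Fin m => g (k + n + j) ω := by
    funext j; congr 1; simp [Fin.coe_natAdd]; omega
  rw [h1, h2]

section Iso
variable (hiso : ∀ g : G, Isometry (fun y : X => g • y)) (x : X)
include hiso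

lemma dist_smul_mul_le (u v : G) :
    dist x ((u * v) • x) ≤ dist x (u • x) + dist x (v • x) := by
  have h1 : dist x ((u * v) • x) ≤ dist x (u • x) + dist (u • x) ((u * v) • x) := dist_triangle _ _ _
  have h2 : dist (u • x) ((u * v) • x) = dist x (v • x) := by
    rw [mul_smul]
    exact (hiso u).dist_eq x (v • x)
  linarith

lemma dist_smul_le_mul (u v : G) :
    dist x (v • x) ≤ dist x (u • x) + dist x ((u * v) • x) := by
  have h2 : dist (u • x) ((u * v) • x) = dist x (v • x) := by
    rw [mul_smul]; exact (hiso u).dist_eq x (v • x)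
  have h1 : dist (u • x) ((u * v) • x) ≤ dist (u • x) x + dist x ((u * v) • x) := dist_triangle _ _ _
  rw [h2] at h1
  rwa [dist_comm (u • x) x] at h1

lemma am_subadd (g : ℕ → Ω → G) (k n m : ℕ) (ω : Ω) :
    am x g k (n + m) ω ≤ am x g k n ω + am x g (k + n) m ω := by
  unfold am
  rw [wlk_add]
  exact dist_smul_mul_le hiso x _ _

lemma am_le_sum (g : ℕ → Ω → G) (k n : ℕ) (ω : Ω) :
    am x g k n ω ≤ ∑ i ∈ Finset.range n, dist x (g (k + i) ω • x) := by
  induction n with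
  | zero => simp [am_zero]
  | succ n ih =>
    have h1 := am_subadd hiso x g k n 1 ω
    rw [am_one] at h1
    rw [Finset.sum_range_succ]
    linarith

lemma am_sub_le (g : ℕ → Ω → G) (k n : ℕ) (ω : Ω) :
    am x g k n ω ≤ am x g 0 k ω + am x g 0 (k + n) ω := by
  have h := dist_smul_le_mul hiso x (wlk g 0 k ω) (wlk g k n ω)
  have hw : wlk g 0 (k + n) ω = wlk g 0 k ω * wlk g k n ω := by
    simpa using wlk_add g 0 k n ω
  rw [← hw] at h
  simpa [am] using h

lemma am_block_le (g : ℕ → Ω → G) (k q : ℕ) (ω : Ω) :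
    am x g 0 (q * k) ω ≤ ∑ j ∈ Finset.range q, am x g (j * k) k ω := by
  induction q with
  | zero => simp [am_zero]
  | succ q ih =>
    have h1 : am x g 0 (q * k + k) ω ≤ am x g 0 (q * k) ω + am x g (q * k) k ω := by
      simpa using am_subadd hiso x g 0 (q * k) k ω
    rw [Finset.sum_range_succ, Nat.succ_mul]
    linarith

end Iso


variable [Countable G] [MeasurableSpace G] [MeasurableSingletonClass G]
  {mΩ : MeasurableSpace Ω} {P : Measure Ω} [IsProbabilityMeasure P]
  {μ : Measure G} [IsProbabilityMeasure μ] {g : ℕ → Ω → G}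
section Prob

variable [Countable G] [MeasurableSpace G] [MeasurableSingletonClass G]
  {mΩ : MeasurableSpace Ω} {P : Measure Ω} [IsProbabilityMeasure P]
  {μ : Measure G} [IsProbabilityMeasure μ] {g : ℕ → Ω → G}

lemma blk_measurable' {m' : MeasurableSpace Ω} {k n : ℕ}
    (hg : ∀ i, k ≤ i → Measurable[m'] (g i)) : Measurable[m'] (blk g k n) :=
  measurable_pi_lambda _ fun i => hg _ (Nat.le_add_right _ _)

lemma blk_measurable (hmeas : ∀ n, Measurable (g n)) (k n : ℕ) :
    Measurable (blk g k n) :=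
  blk_measurable' fun i _ => hmeas i

lemma am_measurable' (x : X) {m' : MeasurableSpace Ω} {k n : ℕ}
    (hg : ∀ i, k ≤ i → Measurable[m'] (g i)) : Measurable[m'] (am x g k n) := by
  rw [am_eq_comp]
  exact (measurable_of_countable (fdist x n)).comp (blk_measurable' hg)

lemma am_measurable (x : X) (hmeas : ∀ n, Measurable (g n)) (k n : ℕ) :
    Measurable (am x g k n) :=
  am_measurable' x fun i _ => hmeas i

lemma blk_map_singleton (hmeas : ∀ n, Measurable (g n))
    (hindep : iIndepFun g P)
    (hdist : ∀ n, Measure.map (g n) P = μ) (k n : ℕ) (v : Fin n → G) :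
    P.map (blk g k n) {v} = ∏ i : Fin n, μ {v i} := by
  classical
  rw [Measure.map_apply (blk_measurable hmeas k n) (measurableSet_singleton v)]
  set sets : ℕ → Set G := fun j => if h : j - k < n then {v ⟨j - k, h⟩} else Set.univ with hsets
  have hpre : blk g k n ⁻¹' {v} = ⋂ j ∈ Finset.Ico k (k + n), g j ⁻¹' sets j := by
    ext ω
    simp only [Set.mem_preimage, Set.mem_singleton_iff, funext_iff, Set.mem_iInter,
      Finset.mem_Ico, blk]
    constructor
    · intro h j hj
      have hlt : j - k < n := by omega
      have hkj : k + (j - k) = j := by omega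
      simp only [hsets, dif_pos hlt, Set.mem_singleton_iff]
      have := h ⟨j - k, hlt⟩
      rw [hkj] at this
      exact this
    · intro h i
      have hj : k ≤ k + (i : ℕ) ∧ k + (i : ℕ) < k + n := ⟨Nat.le_add_right _ _, by omega⟩
      have := h (k + i) hj
      have hlt : k + (i : ℕ) - k < n := by omega
      simp only [hsets, dif_pos hlt, Set.mem_singleton_iff] at this
      have hfin : (⟨k + (i : ℕ) - k, hlt⟩ : Fin n) = i := by
        ext; simp only []; omega
      rw [hfin] at this
      exact this
  rw [hpre]
  have hmeassets : ∀ j ∈ Finset.Ico k (k + n), MeasurableSet (sets j) := by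
    intro j _
    by_cases h : j - k < n
    · simp only [hsets, dif_pos h]; exact measurableSet_singleton _
    · simp only [hsets, dif_neg h]; exact MeasurableSet.univ
  rw [hindep.measure_inter_preimage_eq_mul (Finset.Ico k (k + n)) hmeassets]
  have heach : ∀ j ∈ Finset.Ico k (k + n), P (g j ⁻¹' sets j) = μ (sets j) := by
    intro j hj
    rw [← hdist j, Measure.map_apply (hmeas j) (hmeassets j hj)]
  rw [Finset.prod_congr rfl heach, Finset.prod_Ico_eq_prod_range]
  have : ∀ i ∈ Finset.range ((k + n) - k), μ (sets (k + i)) =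
      (fun i : ℕ => if h : i < n then μ {v ⟨i, h⟩} else 1) i := by
    intro i hi
    simp only [Finset.mem_range] at hi
    have h1 : k + i - k = i := by omega
    have h2 : i < n := by omega
    simp only [hsets, h1, dif_pos h2]
  rw [Finset.prod_congr rfl this]
  have h3 : (k + n) - k = n := by omega
  rw [h3, ← Fin.prod_univ_eq_prod_range]
  apply Finset.prod_congr rfl
  intro i _
  simp [i.2]

lemma blk_identDistrib (hmeas : ∀ n, Measurable (g n))
    (hindep : iIndepFun g P)
    (hdist : ∀ n, Measure.map (g n) P = μ) (k n : ℕ) :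
    IdentDistrib (blk g k n) (blk g 0 n) P P := by
  refine ⟨(blk_measurable hmeas k n).aemeasurable, (blk_measurable hmeas 0 n).aemeasurable, ?_⟩
  apply Measure.ext_of_singleton
  intro v
  rw [blk_map_singleton hmeas hindep hdist k n v, blk_map_singleton hmeas hindep hdist 0 n v]

lemma comp_blk_identDistrib (hmeas : ∀ n, Measurable (g n))
    (hindep : iIndepFun g P)
    (hdist : ∀ n, Measure.map (g n) P = μ) (k n : ℕ) (F : (Fin n → G) → ℝ) :
    IdentDistrib (F ∘ blk g k n) (F ∘ blk g 0 n) P P :=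
  (blk_identDistrib hmeas hindep hdist k n).comp (measurable_of_countable F)

lemma blk_indepFun (hmeas : ∀ n, Measurable (g n))
    (hindep : iIndepFun g P)
    {k₁ n₁ k₂ n₂ : ℕ} (h : k₁ + n₁ ≤ k₂) :
    IndepFun (blk g k₁ n₁) (blk g k₂ n₂) P := by
  classical
  have hdisj : Disjoint (Finset.Ico k₁ (k₁ + n₁)) (Finset.Ico k₂ (k₂ + n₂)) := by
    simp only [Finset.disjoint_left, Finset.mem_Ico]
    intro a ha1 ha2
    omega
  have hbase := hindep.indepFun_finset _ _ hdisj hmeas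
  have hψ : ∀ (k n : ℕ), Measurable
      (fun (w : ∀ i : (Finset.Ico k (k + n) : Finset ℕ), G) (i : Fin n) =>
        w ⟨k + i, by simp only [Finset.mem_coe, Finset.mem_Ico]; omega⟩) := by
    intro k n
    exact measurable_pi_lambda _ fun i => measurable_pi_apply _
  have := hbase.comp (hψ k₁ n₁) (hψ k₂ n₂)
  convert this using 1 <;> rfl

end Prob
section D

/-- The increment distance `d_i(ω) = d(x, g_i ω • x)`. -/
def dd (x : X) (g : ℕ → Ω → G) (i : ℕ) (ω : Ω) : ℝ := dist x (g i ω • x)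

lemma dd_measurable (x : X) (hmeas : ∀ n, Measurable (g n)) (i : ℕ) :
    Measurable (dd x g i) :=
  (measurable_of_countable (fun u : G => dist x (u • x))).comp (hmeas i)

lemma dd_integrable (x : X) (hmeas : ∀ n, Measurable (g n))
    (hdist : ∀ n, Measure.map (g n) P = μ)
    (hmom : Integrable (fun u : G => dist x (u • x)) μ) (i : ℕ) :
    Integrable (dd x g i) P := by
  have h := (integrable_map_measure (μ := P)
    (f := g i) (g := fun u : G => dist x (u • x))
    ((measurable_of_countable _).aestronglyMeasurable) (hmeas i).aemeasurable).1
  rw [hdist i] at h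
  exact h hmom

lemma dd_integral (x : X) (hmeas : ∀ n, Measurable (g n))
    (hdist : ∀ n, Measure.map (g n) P = μ) (i : ℕ) :
    ∫ ω, dd x g i ω ∂P = ∫ u, dist x (u • x) ∂μ := by
  rw [← hdist i]
  rw [integral_map (hmeas i).aemeasurable ((measurable_of_countable _).aestronglyMeasurable)]
  rfl

lemma dd_identDistrib (x : X) (hmeas : ∀ n, Measurable (g n))
    (hdist : ∀ n, Measure.map (g n) P = μ) (i : ℕ) :
    IdentDistrib (dd x g i) (dd x g 0) P P := by
  refine ⟨((dd_measurable x hmeas i)).aemeasurable, ((dd_measurable x hmeas 0)).aemeasurable, ?_⟩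
  have h1 : Measure.map (dd x g i) P
      = Measure.map (fun u : G => dist x (u • x)) (Measure.map (g i) P) := by
    rw [Measure.map_map (measurable_of_countable _) (hmeas i)]; rfl
  have h2 : Measure.map (dd x g 0) P
      = Measure.map (fun u : G => dist x (u • x)) (Measure.map (g 0) P) := by
    rw [Measure.map_map (measurable_of_countable _) (hmeas 0)]; rfl
  rw [h1, h2, hdist i, hdist 0]

lemma dd_slln (x : X) (hmeas : ∀ n, Measurable (g n))
    (hindep : iIndepFun g P)
    (hdist : ∀ n, Measure.map (g n) P = μ)
    (hmom : Integrable (fun u : G => dist x (u • x)) μ) :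
    ∀ᵐ ω ∂P, Tendsto (fun n : ℕ => (∑ i ∈ Finset.range n, dd x g i ω) / n) atTop
      (nhds (∫ u, dist x (u • x) ∂μ)) := by
  have hpair : Pairwise (Function.onFun (IndepFun · · P) (dd x g)) := by
    intro i j hij
    exact (hindep.indepFun hij).comp
      (measurable_of_countable (fun u : G => dist x (u • x)))
      (measurable_of_countable (fun u : G => dist x (u • x)))
  have h := strong_law_ae_real (dd x g) (dd_integrable x hmeas hdist hmom 0) hpair
    (fun i => dd_identDistrib x hmeas hdist i)
  have : P[dd x g 0] = ∫ u, dist x (u • x) ∂μ := dd_integral x hmeas hdist 0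
  rwa [this] at h

end D

section Blocks

variable [Countable G] [MeasurableSpace G] [MeasurableSingletonClass G]
  {mΩ : MeasurableSpace Ω} {P : Measure Ω} [IsProbabilityMeasure P]
  {μ : Measure G} [IsProbabilityMeasure μ] {g : ℕ → Ω → G}

lemma am_integrable (hiso : ∀ g : G, Isometry (fun y : X => g • y)) (x : X)
    (hmeas : ∀ n, Measurable (g n)) (hdist : ∀ n, Measure.map (g n) P = μ)
    (hmom : Integrable (fun u : G => dist x (u • x)) μ) (k n : ℕ) :
    Integrable (am x g k n) P := by
  refine Integrable.mono' (g := fun ω => ∑ i ∈ Finset.range n, dd x g (k + i) ω)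
    (integrable_finset_sum _ fun i _ => dd_integrable x hmeas hdist hmom (k + i))
    (am_measurable x hmeas k n).aestronglyMeasurable ?_
  refine Filter.Eventually.of_forall fun ω => ?_
  rw [Real.norm_eq_abs, abs_of_nonneg (am_nonneg x g k n ω)]
  exact am_le_sum hiso x g k n ω

lemma am_integral_eq (x : X) (hmeas : ∀ n, Measurable (g n))
    (hindep : iIndepFun g P)
    (hdist : ∀ n, Measure.map (g n) P = μ) (k n : ℕ) :
    ∫ ω, am x g k n ω ∂P = ∫ ω, am x g 0 n ω ∂P := by
  have h := (comp_blk_identDistrib hmeas hindep hdist k n (fdist x n)).integral_eq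
  rw [am_eq_comp, am_eq_comp]
  exact h

/-- SLLN for the block variables `Y_j = am x g (j*k) k`. -/
lemma am_block_slln (x : X) (hmeas : ∀ n, Measurable (g n))
    (hindep : iIndepFun g P)
    (hdist : ∀ n, Measure.map (g n) P = μ)
    (hmom : Integrable (fun u : G => dist x (u • x)) μ)
    (hiso : ∀ g : G, Isometry (fun y : X => g • y)) {k : ℕ} (hk : 0 < k) :
    ∀ᵐ ω ∂P, Tendsto (fun q : ℕ => (∑ j ∈ Finset.range q, am x g (j * k) k ω) / q) atTop
      (nhds (∫ ω, am x g 0 k ω ∂P)) := by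
  set Y : ℕ → Ω → ℝ := fun j => am x g (j * k) k with hY
  have hident : ∀ j, IdentDistrib (Y j) (Y 0) P P := by
    intro j
    have h1 := comp_blk_identDistrib (μ := μ) hmeas hindep hdist (j * k) k (fdist x k)
    have h2 := comp_blk_identDistrib (μ := μ) hmeas hindep hdist (0 * k) k (fdist x k)
    have := h1.trans h2.symm
    rw [← am_eq_comp, ← am_eq_comp] at this
    exact this
  have hpair : Pairwise (Function.onFun (IndepFun · · P) Y) := by
    have key : ∀ i j : ℕ, i < j → IndepFun (Y i) (Y j) P := by
      intro i j hij
      have h : i * k + k ≤ j * k := by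
        calc i * k + k = (i + 1) * k := by ring
        _ ≤ j * k := Nat.mul_le_mul_right k hij
      have := (blk_indepFun hmeas hindep h).comp
        (measurable_of_countable (fdist x k)) (measurable_of_countable (fdist x k))
      exact this
    intro i j hij
    rcases lt_or_gt_of_ne hij with h | h
    · exact key i j h
    · exact (key j i h).symm
  have hint : Integrable (Y 0) P := am_integrable hiso x hmeas hdist hmom (0 * k) k
  have h := strong_law_ae_real Y hint hpair hident
  have heq : P[Y 0] = ∫ ω, am x g 0 k ω ∂P := by
    show ∫ ω, am x g (0 * k) k ω ∂P = _
    rw [Nat.zero_mul]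
  rwa [heq] at h

/-- SLLN for the block sums `Z_j = ∑_{i<k} d_{jk+i}`. -/
lemma dd_block_slln (x : X) (hmeas : ∀ n, Measurable (g n))
    (hindep : iIndepFun g P)
    (hdist : ∀ n, Measure.map (g n) P = μ)
    (hmom : Integrable (fun u : G => dist x (u • x)) μ) {k : ℕ} (hk : 0 < k) :
    ∀ᵐ ω ∂P, Tendsto
      (fun q : ℕ => (∑ j ∈ Finset.range q, ∑ i : Fin k, dd x g (j * k + i) ω) / q) atTop
      (nhds ((k : ℝ) * ∫ u, dist x (u • x) ∂μ)) := by
  set F : (Fin k → G) → ℝ := fun v => ∑ i : Fin k, dist x (v i • x) with hF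
  set Z : ℕ → Ω → ℝ := fun j ω => ∑ i : Fin k, dd x g (j * k + i) ω with hZ
  have hcomp : ∀ j, Z j = F ∘ blk g (j * k) k := fun j => rfl
  have hident : ∀ j, IdentDistrib (Z j) (Z 0) P P := by
    intro j
    have h1 := comp_blk_identDistrib (μ := μ) hmeas hindep hdist (j * k) k F
    have h2 := comp_blk_identDistrib (μ := μ) hmeas hindep hdist (0 * k) k F
    have := h1.trans h2.symm
    rw [← hcomp, ← hcomp] at this
    exact this
  have hpair : Pairwise (Function.onFun (IndepFun · · P) Z) := by
    have key : ∀ i j : ℕ, i < j → IndepFun (Z i) (Z j) P := by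
      intro i j hij
      have h : i * k + k ≤ j * k := by
        calc i * k + k = (i + 1) * k := by ring
        _ ≤ j * k := Nat.mul_le_mul_right k hij
      exact (blk_indepFun hmeas hindep h).comp
        (measurable_of_countable F) (measurable_of_countable F)
    intro i j hij
    rcases lt_or_gt_of_ne hij with h | h
    · exact key i j h
    · exact (key j i h).symm
  have hint : Integrable (Z 0) P :=
    integrable_finset_sum _ fun i _ => dd_integrable x hmeas hdist hmom (0 * k + i)
  have h := strong_law_ae_real Z hint hpair hident
  have heq : P[Z 0] = (k : ℝ) * ∫ u, dist x (u • x) ∂μ := by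
    show ∫ ω, ∑ i : Fin k, dd x g (0 * k + i) ω ∂P = _
    have hsum := integral_finset_sum (μ := P) Finset.univ
      (f := fun (i : Fin k) ω => dd x g (0 * k + i) ω)
      (fun i _ => dd_integrable x hmeas hdist hmom (0 * k + i))
    rw [hsum]
    have : ∀ i : Fin k, ∫ ω, dd x g (0 * k + i) ω ∂P = ∫ u, dist x (u • x) ∂μ :=
      fun i => dd_integral x hmeas hdist _
    rw [Finset.sum_congr rfl fun i _ => this i]
    simp [Finset.card_univ]
  rwa [heq] at h

end Blocks

section Cover

variable [Countable G] [MeasurableSpace G] [MeasurableSingletonClass G]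
  {mΩ : MeasurableSpace Ω} {P : Measure Ω} [IsProbabilityMeasure P]
  {μ : Measure G} [IsProbabilityMeasure μ] {g : ℕ → Ω → G}

open Classical in
/-- `badf q N i ω` is `d_i(ω)` if no good time `n ≤ N` starting from `i` exists, else `0`. -/
noncomputable def badf (x : X) (g : ℕ → Ω → G) (q : ℝ) (N i : ℕ) (ω : Ω) : ℝ :=
  if ∃ n, 1 ≤ n ∧ n ≤ N ∧ am x g i n ω ≤ n * q then 0 else dd x g i ω

lemma badf_nonneg (x : X) (g : ℕ → Ω → G) (q : ℝ) (N i : ℕ) (ω : Ω) :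
    0 ≤ badf x g q N i ω := by
  unfold badf; split
  · exact le_refl 0
  · exact dist_nonneg

lemma badf_le_dd (x : X) (g : ℕ → Ω → G) (q : ℝ) (N i : ℕ) (ω : Ω) :
    badf x g q N i ω ≤ dd x g i ω := by
  unfold badf; split
  · exact dist_nonneg
  · exact le_refl _

open Classical in
/-- The functional on blocks computing `badf`. -/
noncomputable def badF (x : X) (q : ℝ) {N : ℕ} (hN : 0 < N) : (Fin N → G) → ℝ := fun v =>
  if ∃ n, ∃ h : n ≤ N, 1 ≤ n ∧
      fdist x n (fun t : Fin n => v ⟨t, lt_of_lt_of_le t.2 h⟩) ≤ n * q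
  then 0 else dist x (v ⟨0, hN⟩ • x)

lemma badf_eq_comp (x : X) (g : ℕ → Ω → G) (q : ℝ) {N : ℕ} (hN : 0 < N) (i : ℕ) :
    badf x g q N i = badF x q hN ∘ blk g i N := by
  funext ω
  have hiff : (∃ n, 1 ≤ n ∧ n ≤ N ∧ am x g i n ω ≤ n * q) ↔
      (∃ n, ∃ h : n ≤ N, 1 ≤ n ∧
        fdist x n (fun t : Fin n => blk g i N ω ⟨t, lt_of_lt_of_le t.2 h⟩) ≤ n * q) := by
    constructor
    · rintro ⟨n, h1, h2, h3⟩
      exact ⟨n, h2, h1, h3⟩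
    · rintro ⟨n, h2, h1, h3⟩
      exact ⟨n, h1, h2, h3⟩
  simp only [badf, badF, Function.comp_apply]
  classical
  by_cases hcond : ∃ n, 1 ≤ n ∧ n ≤ N ∧ am x g i n ω ≤ n * q
  · rw [if_pos hcond, if_pos (hiff.1 hcond)]
  · rw [if_neg hcond, if_neg (fun hc => hcond (hiff.2 hc))]
    rfl

lemma badf_measurable (x : X) (hmeas : ∀ n, Measurable (g n)) (q : ℝ) {N : ℕ}
    (hN : 0 < N) (i : ℕ) : Measurable (badf x g q N i) := by
  rw [badf_eq_comp x g q hN i]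
  exact (measurable_of_countable _).comp (blk_measurable hmeas i N)

lemma badf_integrable (x : X) (hmeas : ∀ n, Measurable (g n))
    (hdist : ∀ n, Measure.map (g n) P = μ)
    (hmom : Integrable (fun u : G => dist x (u • x)) μ) (q : ℝ) {N : ℕ}
    (hN : 0 < N) (i : ℕ) : Integrable (badf x g q N i) P := by
  refine Integrable.mono' (dd_integrable x hmeas hdist hmom i)
    (badf_measurable x hmeas q hN i).aestronglyMeasurable ?_
  refine Filter.Eventually.of_forall fun ω => ?_
  rw [Real.norm_eq_abs, abs_of_nonneg (badf_nonneg x g q N i ω)]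
  exact badf_le_dd x g q N i ω

lemma badf_integral_eq (x : X) (hmeas : ∀ n, Measurable (g n))
    (hindep : iIndepFun g P)
    (hdist : ∀ n, Measure.map (g n) P = μ) (q : ℝ) {N : ℕ} (hN : 0 < N) (i : ℕ) :
    ∫ ω, badf x g q N i ω ∂P = ∫ ω, badf x g q N 0 ω ∂P := by
  rw [badf_eq_comp x g q hN i, badf_eq_comp x g q hN 0]
  exact (comp_blk_identDistrib hmeas hindep hdist i N (badF x q hN)).integral_eq

/-- The covering inequality (pointwise, Steele's argument). -/
lemma covering (hiso : ∀ g : G, Isometry (fun y : X => g • y)) (x : X) (g : ℕ → Ω → G)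
    {q : ℝ} (hq : 0 ≤ q) {N : ℕ} (hN : 0 < N) (K : ℕ) (ω : Ω) :
    am x g 0 K ω ≤ q * K + (∑ i ∈ Finset.range K, badf x g q N i ω)
      + ∑ i ∈ Finset.Ico (K - N) K, dd x g i ω := by
  have main : ∀ m j, j + m = K → am x g j m ω ≤ q * m
      + (∑ i ∈ Finset.Ico j K, badf x g q N i ω)
      + ∑ i ∈ Finset.Ico (K - N) K, dd x g i ω := by
    intro m
    induction m using Nat.strong_induction_on with
    | _ m IH =>
      intro j hjm
      have hbadnn : ∀ (a b : ℕ), 0 ≤ ∑ i ∈ Finset.Ico a b, badf x g q N i ω :=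
        fun a b => Finset.sum_nonneg fun i _ => badf_nonneg x g q N i ω
      have hddnn : ∀ (a b : ℕ), 0 ≤ ∑ i ∈ Finset.Ico a b, dd x g i ω :=
        fun a b => Finset.sum_nonneg fun i _ => dist_nonneg
      rcases Nat.eq_zero_or_pos m with hm0 | hm
      · subst hm0
        rw [am_zero]
        have := hbadnn j K
        have := hddnn (K - N) K
        have : 0 ≤ q * (0 : ℕ) := by simp
        positivity
      rcases le_or_gt (K - N) j with hj | hj
      · -- within the final window: crude bound
        have h1 : am x g j m ω ≤ ∑ i ∈ Finset.range m, dd x g (j + i) ω :=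
          am_le_sum hiso x g j m ω
        have h2 : ∑ i ∈ Finset.range m, dd x g (j + i) ω = ∑ i ∈ Finset.Ico j K, dd x g i ω := by
          rw [Finset.sum_Ico_eq_sum_range, show K - j = m from by omega]
        have h3 : ∑ i ∈ Finset.Ico j K, dd x g i ω ≤ ∑ i ∈ Finset.Ico (K - N) K, dd x g i ω :=
          Finset.sum_le_sum_of_subset_of_nonneg
            (Finset.Ico_subset_Ico hj le_rfl) (fun i _ _ => dist_nonneg)
        have h4 : 0 ≤ q * m := by positivity
        have := hbadnn j K
        linarith
      · by_cases hgood : ∃ n, 1 ≤ n ∧ n ≤ N ∧ am x g j n ω ≤ n * q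
        · obtain ⟨n, hn1, hnN, hle⟩ := hgood
          have hnm : n < m := by omega
          have hsplit : am x g j m ω ≤ am x g j n ω + am x g (j + n) (m - n) ω := by
            have h := am_subadd hiso x g j n (m - n) ω
            rw [show n + (m - n) = m from by omega] at h
            exact h
          have hIH := IH (m - n) (by omega) (j + n) (by omega)
          have hsum : ∑ i ∈ Finset.Ico (j + n) K, badf x g q N i ω
              ≤ ∑ i ∈ Finset.Ico j K, badf x g q N i ω :=
            Finset.sum_le_sum_of_subset_of_nonneg
              (Finset.Ico_subset_Ico (by omega) le_rfl)
              (fun i _ _ => badf_nonneg x g q N i ω)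
          have hcast : (n : ℝ) * q + q * ((m - n : ℕ) : ℝ) = q * m := by
            have : ((m - n : ℕ) : ℝ) = (m : ℝ) - n := by
              push_cast [Nat.cast_sub hnm.le]; ring
            rw [this]; ring
          linarith
        · have h1 : am x g j m ω ≤ dd x g j ω + am x g (j + 1) (m - 1) ω := by
            have h := am_subadd hiso x g j 1 (m - 1) ω
            rw [show 1 + (m - 1) = m from by omega] at h
            rw [am_one] at h
            exact h
          have hbeq : badf x g q N j ω = dd x g j ω := by
            unfold badf
            rw [if_neg hgood]
          have hIH := IH (m - 1) (by omega) (j + 1) (by omega)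
          have hsplit : ∑ i ∈ Finset.Ico j K, badf x g q N i ω
              = badf x g q N j ω + ∑ i ∈ Finset.Ico (j + 1) K, badf x g q N i ω :=
            Finset.sum_eq_sum_Ico_succ_bot (show j < K from by omega) _
          have hcast : q * ((m - 1 : ℕ) : ℝ) ≤ q * m := by
            apply mul_le_mul_of_nonneg_left _ hq
            push_cast [Nat.cast_sub hm]
            linarith
          linarith
  have := main K 0 (by omega)
  rw [Finset.range_eq_Ico]
  simpa using this

/-- Expectation bound from the covering inequality. -/
lemma integral_am_le (hiso : ∀ g : G, Isometry (fun y : X => g • y)) (x : X)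
    (hmeas : ∀ n, Measurable (g n))
    (hindep : iIndepFun g P)
    (hdist : ∀ n, Measure.map (g n) P = μ)
    (hmom : Integrable (fun u : G => dist x (u • x)) μ)
    {q : ℝ} (hq : 0 ≤ q) {N : ℕ} (hN : 0 < N) (K : ℕ) :
    ∫ ω, am x g 0 K ω ∂P ≤ q * K + K * (∫ ω, badf x g q N 0 ω ∂P)
      + N * ∫ u, dist x (u • x) ∂μ := by
  have hint1 : Integrable (fun ω => ∑ i ∈ Finset.range K, badf x g q N i ω) P :=
    integrable_finset_sum _ fun i _ => badf_integrable x hmeas hdist hmom q hN i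
  have hint2 : Integrable (fun ω => ∑ i ∈ Finset.Ico (K - N) K, dd x g i ω) P :=
    integrable_finset_sum _ fun i _ => dd_integrable x hmeas hdist hmom i
  have hcov : ∀ ω, am x g 0 K ω ≤ q * K + (∑ i ∈ Finset.range K, badf x g q N i ω)
      + ∑ i ∈ Finset.Ico (K - N) K, dd x g i ω := covering hiso x g hq hN K
  have hintA : Integrable (fun ω => q * (K : ℝ) + ∑ i ∈ Finset.range K, badf x g q N i ω) P :=
    (integrable_const _).add hint1
  have hintB : Integrable (fun ω => q * (K : ℝ) + (∑ i ∈ Finset.range K, badf x g q N i ω)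
      + ∑ i ∈ Finset.Ico (K - N) K, dd x g i ω) P := hintA.add hint2
  have hmono := integral_mono (am_integrable hiso x hmeas hdist hmom 0 K) hintB hcov
  have hsum1 : ∫ ω, (q * (K : ℝ) + (∑ i ∈ Finset.range K, badf x g q N i ω)
      + ∑ i ∈ Finset.Ico (K - N) K, dd x g i ω) ∂P
      = q * K + (∫ ω, ∑ i ∈ Finset.range K, badf x g q N i ω ∂P)
      + ∫ ω, ∑ i ∈ Finset.Ico (K - N) K, dd x g i ω ∂P := by
    rw [integral_add hintA hint2, integral_add (integrable_const _) hint1, integral_const]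
    simp
  have hbadsum : ∫ ω, ∑ i ∈ Finset.range K, badf x g q N i ω ∂P
      = K * ∫ ω, badf x g q N 0 ω ∂P := by
    rw [integral_finset_sum _ fun i _ => badf_integrable x hmeas hdist hmom q hN i]
    rw [Finset.sum_congr rfl fun i _ => badf_integral_eq x hmeas hindep hdist q hN i]
    simp [Finset.card_range]
  have hddsum : ∫ ω, ∑ i ∈ Finset.Ico (K - N) K, dd x g i ω ∂P
      ≤ N * ∫ u, dist x (u • x) ∂μ := by
    rw [integral_finset_sum _ fun i _ => dd_integrable x hmeas hdist hmom i]
    rw [Finset.sum_congr rfl fun i _ => dd_integral x hmeas hdist i]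
    have hm : 0 ≤ ∫ u, dist x (u • x) ∂μ := integral_nonneg fun u => dist_nonneg
    have hcard : ((Finset.Ico (K - N) K).card : ℝ) ≤ N := by
      rw [Nat.card_Ico]
      exact_mod_cast Nat.le_of_lt_succ (by omega)
    calc ∑ _i ∈ Finset.Ico (K - N) K, ∫ u, dist x (u • x) ∂μ
        = ((Finset.Ico (K - N) K).card : ℝ) * ∫ u, dist x (u • x) ∂μ := by
          rw [Finset.sum_const, nsmul_eq_mul]
      _ ≤ N * ∫ u, dist x (u • x) ∂μ := mul_le_mul_of_nonneg_right hcard hm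
  rw [hsum1] at hmono
  linarith

end Cover

section Tail

variable [Countable G] [MeasurableSpace G] [MeasurableSingletonClass G]
  {mΩ : MeasurableSpace Ω} {P : Measure Ω} [IsProbabilityMeasure P]
  {μ : Measure G} [IsProbabilityMeasure μ] {g : ℕ → Ω → G}

/-- The liminf of `a_n/n` can be computed from any shifted walk. -/
lemma liminf_shift (hiso : ∀ g : G, Isometry (fun y : X => g • y)) (x : X) (g : ℕ → Ω → G)
    (k : ℕ) (ω : Ω) :
    liminf (fun n : ℕ => am x g 0 n ω / n) atTop
      = liminf (fun n : ℕ => am x g k n ω / ((k + n : ℕ) : ℝ)) atTop := by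
  rw [← liminf_nat_add (fun n : ℕ => am x g 0 n ω / n) k]
  apply liminf_congr_sub
  have hbnd : ∀ n : ℕ, |am x g 0 (n + k) ω / ((n + k : ℕ) : ℝ) - am x g k n ω / ((k + n : ℕ) : ℝ)|
      ≤ am x g 0 k ω / ((k + n : ℕ) : ℝ) := by
    intro n
    have hcomm : ((n + k : ℕ) : ℝ) = ((k + n : ℕ) : ℝ) := by push_cast; ring
    have hup : am x g 0 (n + k) ω ≤ am x g 0 k ω + am x g k n ω := by
      have h := am_subadd hiso x g 0 k n ω
      rw [show k + n = n + k from by omega] at h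
      simpa using h
    have hlo : am x g k n ω ≤ am x g 0 k ω + am x g 0 (n + k) ω := by
      have h := am_sub_le hiso x g k n ω
      rw [show k + n = n + k from by omega] at h
      exact h
    rw [hcomm, div_sub_div_same, abs_div,
      abs_of_nonneg (show (0:ℝ) ≤ ((k + n : ℕ) : ℝ) from Nat.cast_nonneg _)]
    have habs : |am x g 0 (n + k) ω - am x g k n ω| ≤ am x g 0 k ω := by
      rw [abs_le]
      constructor <;> linarith
    rcases Nat.eq_zero_or_pos (k + n) with h0 | hpos
    · rw [h0]; simp
    · exact (div_le_div_iff_of_pos_right (show (0:ℝ) < ((k + n : ℕ) : ℝ) from by exact_mod_cast hpos)).2 habs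
  have htend : Tendsto (fun n : ℕ => am x g 0 k ω / ((k + n : ℕ) : ℝ)) atTop (nhds 0) := by
    apply Tendsto.div_atTop tendsto_const_nhds
    have h1 : Tendsto (fun n : ℕ => (k + n)) atTop atTop :=
      tendsto_atTop_mono (fun n => Nat.le_add_left n k) tendsto_id
    exact tendsto_natCast_atTop_atTop.comp h1
  exact squeeze_zero_norm (fun n => by rw [Real.norm_eq_abs]; exact hbnd n) htend

/-- Kolmogorov 0-1 law specialised to our tail events. -/
lemma tail_zero_one (hmeas : ∀ n, Measurable (g n))
    (hindep : iIndepFun g P) {t : Set Ω}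
    (ht : ∀ k : ℕ, MeasurableSet[⨆ i, ⨆ (_ : i ≥ k),
      MeasurableSpace.comap (g i) inferInstance] t) :
    P t = 0 ∨ P t = 1 := by
  have h_le : ∀ n, MeasurableSpace.comap (g n) inferInstance ≤ mΩ :=
    fun n => measurable_iff_comap_le.1 (hmeas n)
  have h_indep : iIndep (fun n => MeasurableSpace.comap (g n) inferInstance) P :=
    (iIndepFun_iff_iIndep _ _ _).1 hindep
  apply measure_zero_or_one_of_measurableSet_limsup_atTop h_le h_indep
  rw [limsup_eq_iInf_iSup_of_nat]
  exact MeasurableSpace.measurableSet_iInf.2 ht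

/-- The event `liminf a_n / n < q` is a tail event. -/
lemma liminf_event_tail_measurable (hiso : ∀ g : G, Isometry (fun y : X => g • y)) (x : X)
    (k : ℕ) (q : ℝ) :
    MeasurableSet[⨆ i, ⨆ (_ : i ≥ k), MeasurableSpace.comap (g i) inferInstance]
      {ω | liminf (fun n : ℕ => am x g 0 n ω / n) atTop < q} := by
  set m' : MeasurableSpace Ω := ⨆ i, ⨆ (_ : i ≥ k), MeasurableSpace.comap (g i) inferInstance
    with hm'
  have hg : ∀ i, k ≤ i → Measurable[m'] (g i) := by
    intro i hi
    have h0 : Measurable[MeasurableSpace.comap (g i) inferInstance] (g i) :=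
      fun s hs => ⟨s, hs, rfl⟩
    have hle : MeasurableSpace.comap (g i) inferInstance ≤ m' := by
      rw [hm']
      exact le_iSup₂ (f := fun i (_ : i ≥ k) => MeasurableSpace.comap (g i)
        (inferInstance : MeasurableSpace G)) i hi
    exact h0.mono hle le_rfl
  have hml : Measurable[m'] (fun ω => liminf (fun n : ℕ => am x g k n ω / ((k + n : ℕ) : ℝ))
      atTop) := by
    apply Measurable.liminf
    intro n
    exact (am_measurable' x hg).div_const _
  have hset : {ω | liminf (fun n : ℕ => am x g 0 n ω / n) atTop < q}
      = (fun ω => liminf (fun n : ℕ => am x g k n ω / ((k + n : ℕ) : ℝ)) atTop) ⁻¹'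
        (Set.Iio q) := by
    ext ω
    simp only [Set.mem_setOf_eq, Set.mem_preimage, Set.mem_Iio]
    rw [liminf_shift hiso x g k ω]
  rw [hset]
  exact hml measurableSet_Iio

/-- liminf of a nonnegative real sequence is nonnegative. -/
lemma liminf_nonneg_of_nonneg {u : ℕ → ℝ} (hu : ∀ n, 0 ≤ u n) : 0 ≤ liminf u atTop := by
  rw [liminf_eq]
  by_cases hb : BddAbove {a | ∀ᶠ n in atTop, a ≤ u n}
  · exact le_csSup hb (Filter.Eventually.of_forall hu)
  · rw [Real.sSup_of_not_bddAbove hb]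

end Tail

lemma wlk_eq_range (g : ℕ → Ω → G) (n : ℕ) (ω : Ω) :
    ((List.range n).map (fun i => g i ω)).prod = wlk g 0 n ω := by
  induction n with
  | zero => simp [wlk_zero]
  | succ n ih =>
    rw [List.range_succ, List.map_append, List.prod_append]
    have h1 : wlk g 0 (n + 1) ω = wlk g 0 n ω * wlk g n 1 ω := by
      have := wlk_add g 0 n 1 ω
      rwa [Nat.zero_add] at this
    rw [h1, wlk_one, ih]
    simp

end LinearDriftAux

open LinearDriftAux in
/-- Linear drift: a random walk on a countable group `G` acting by isometries on a metric
space `X`, driven by a measure `μ` with finite first moment, has an almost sure linear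
drift `L ≥ 0`: `d(x, g₁ ⋯ g_n x)/n → L` almost surely, where the increments `g_n` are
i.i.d. with distribution `μ`. -/
theorem linear_drift {G X Ω : Type*} [Group G] [Countable G] [MeasurableSpace G]
    [MeasurableSingletonClass G] [MetricSpace X] [MulAction G X]
    (hiso : ∀ g : G, Isometry (fun y : X => g • y)) (x : X)
    (μ : Measure G) [IsProbabilityMeasure μ]
    (hmom : Integrable (fun g : G => dist x (g • x)) μ)
    {mΩ : MeasurableSpace Ω} (P : Measure Ω) [IsProbabilityMeasure P]
    (g : ℕ → Ω → G) (hmeas : ∀ n, Measurable (g n))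
    (hindep : iIndepFun g P)
    (hdist : ∀ n, Measure.map (g n) P = μ) :
    ∃ L : ℝ, 0 ≤ L ∧ ∀ᵐ ω ∂P,
      Tendsto (fun n : ℕ => dist x ((((List.range n).map (fun i => g i ω)).prod) • x) / n)
        atTop (nhds L) := by
  classical
  set mbar : ℝ := ∫ u, dist x (u • x) ∂μ with hmbar
  have hmbar0 : 0 ≤ mbar := integral_nonneg fun u => dist_nonneg
  set α : ℕ → ℝ := fun n => ∫ ω, am x g 0 n ω ∂P with hα
  have hα0 : ∀ n, 0 ≤ α n := fun n => integral_nonneg fun ω => am_nonneg x g 0 n ω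
  -- subadditivity of α
  have hsub : Subadditive α := by
    intro n m
    have hpt : ∀ ω, am x g 0 (n + m) ω ≤ am x g 0 n ω + am x g n m ω := by
      intro ω
      have h := am_subadd hiso x g 0 n m ω
      rwa [Nat.zero_add] at h
    have hint1 := am_integrable hiso x hmeas hdist hmom 0 (n + m)
    have hint2 := am_integrable hiso x hmeas hdist hmom 0 n
    have hint3 := am_integrable hiso x hmeas hdist hmom n m
    have hint23 : Integrable (fun ω => am x g 0 n ω + am x g n m ω) P := hint2.add hint3
    have h := integral_mono hint1 hint23 hpt
    rw [integral_add hint2 hint3] at h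
    rw [am_integral_eq x hmeas hindep hdist n m] at h
    exact h
  have hbdd : BddBelow (Set.range fun n : ℕ => α n / n) := by
    refine ⟨0, ?_⟩
    rintro y ⟨n, rfl⟩
    exact div_nonneg (hα0 n) (Nat.cast_nonneg n)
  set L : ℝ := hsub.lim with hLdef
  have hLtend : Tendsto (fun n : ℕ => α n / n) atTop (nhds L) := hsub.tendsto_lim hbdd
  have hL0 : 0 ≤ L := by
    apply ge_of_tendsto hLtend
    filter_upwards with n
    exact div_nonneg (hα0 n) (Nat.cast_nonneg n)
  refine ⟨L, hL0, ?_⟩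
  -- a.s. events
  have hE2 : ∀ᵐ ω ∂P, Tendsto (fun n : ℕ => (∑ i ∈ Finset.range n, dd x g i ω) / n) atTop
      (nhds mbar) := dd_slln x hmeas hindep hdist hmom
  have hEY : ∀ᵐ ω ∂P, ∀ k : ℕ, 0 < k → Tendsto
      (fun q : ℕ => (∑ j ∈ Finset.range q, am x g (j * k) k ω) / q) atTop (nhds (α k)) := by
    rw [ae_all_iff]
    intro k
    rcases Nat.eq_zero_or_pos k with hk | hk
    · exact Filter.Eventually.of_forall fun ω h => absurd h (by omega)
    · exact (am_block_slln x hmeas hindep hdist hmom hiso hk).mono fun ω h _ => h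
  have hEZ : ∀ᵐ ω ∂P, ∀ k : ℕ, 0 < k → Tendsto
      (fun q : ℕ => (∑ j ∈ Finset.range q, ∑ i : Fin k, dd x g (j * k + i) ω) / q) atTop
      (nhds ((k : ℝ) * mbar)) := by
    rw [ae_all_iff]
    intro k
    rcases Nat.eq_zero_or_pos k with hk | hk
    · exact Filter.Eventually.of_forall fun ω h => absurd h (by omega)
    · exact (dd_block_slln x hmeas hindep hdist hmom hk).mono fun ω h _ => h
  -- the lower bound event
  have hkey : ∀ qr : ℚ, (qr : ℝ) < L →
      P {ω | liminf (fun n : ℕ => am x g 0 n ω / n) atTop < (qr : ℝ)} = 0 := by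
    intro qr hq
    rcases le_or_gt ((qr : ℝ)) 0 with hq0 | hq0
    · have hempty : {ω | liminf (fun n : ℕ => am x g 0 n ω / n) atTop < (qr : ℝ)} = ∅ := by
        rw [Set.eq_empty_iff_forall_notMem]
        intro ω hω
        simp only [Set.mem_setOf_eq] at hω
        have h0 : 0 ≤ liminf (fun n : ℕ => am x g 0 n ω / n) atTop :=
          liminf_nonneg_of_nonneg fun n => div_nonneg (am_nonneg x g 0 n ω) (Nat.cast_nonneg n)
        linarith
      rw [hempty]
      exact measure_empty
    rcases tail_zero_one hmeas hindep
        (fun k => liminf_event_tail_measurable hiso x k (qr : ℝ)) with h0 | h1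
    · exact h0
    exfalso
    set q : ℝ := (qr : ℝ)
    set β : ℕ → ℝ := fun N => ∫ ω, badf x g q N 0 ω ∂P with hβ
    -- step 1 : L ≤ q + β N for all N ≥ 1
    have hβle : ∀ N : ℕ, 0 < N → L ≤ q + β N := by
      intro N hN
      have hstep : ∀ K : ℕ, 0 < K → L ≤ q + β N + (N : ℝ) * mbar / K := by
        intro K hK
        have hKpos : (0 : ℝ) < (K : ℝ) := by exact_mod_cast hK
        have h1 : α K ≤ q * K + K * β N + N * mbar :=
          integral_am_le hiso x hmeas hindep hdist hmom hq0.le hN K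
        have h2 : L * K ≤ α K := by
          have h := hsub.lim_le_div hbdd (show K ≠ 0 by omega)
          exact (le_div_iff₀ hKpos).1 h
        have h3 : L ≤ (q * K + K * β N + N * mbar) / K :=
          (le_div_iff₀ hKpos).2 (by linarith)
        have h4 : (q * K + K * β N + N * mbar) / K = q + β N + (N : ℝ) * mbar / K := by
          field_simp
        rwa [h4] at h3
      have htendK : Tendsto (fun K : ℕ => q + β N + (N : ℝ) * mbar / K) atTop
          (nhds (q + β N + 0)) := by
        apply Tendsto.add tendsto_const_nhds
        exact Tendsto.div_atTop tendsto_const_nhds tendsto_natCast_atTop_atTop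
      have hev : ∀ᶠ K : ℕ in atTop, L ≤ q + β N + (N : ℝ) * mbar / K := by
        filter_upwards [eventually_ge_atTop 1] with K hK
        exact hstep K (by omega)
      have h := ge_of_tendsto htendK hev
      linarith
    -- step 2 : β N → 0
    have hae1 : ∀ᵐ ω ∂P, liminf (fun n : ℕ => am x g 0 n ω / n) atTop < q := by
      have hms : MeasurableSet {ω | liminf (fun n : ℕ => am x g 0 n ω / n) atTop < q} := by
        have h := liminf_event_tail_measurable (g := g) hiso x 0 q
        have hle : (⨆ i, ⨆ (_ : i ≥ 0), MeasurableSpace.comap (g i)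
            (inferInstance : MeasurableSpace G)) ≤ mΩ := by
          apply iSup₂_le
          intro i _
          exact measurable_iff_comap_le.1 (hmeas i)
        exact hle _ h
      have hcompl := (prob_compl_eq_zero_iff hms).2 h1
      have := measure_eq_zero_iff_ae_notMem.1 hcompl
      filter_upwards [this] with ω hω
      simpa using hω
    have hβ0 : Tendsto β atTop (nhds 0) := by
      have h00 : (0 : ℝ) = ∫ _ω, (0 : ℝ) ∂P := by simp
      rw [hβ, h00]
      apply tendsto_integral_of_dominated_convergence (bound := dd x g 0)
      · intro N
        rcases Nat.eq_zero_or_pos N with hN | hN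
        · subst hN
          have : badf x g q 0 0 = dd x g 0 := by
            funext ω
            unfold badf
            rw [if_neg]
            rintro ⟨n, h1', h2', _⟩
            omega
          rw [this]
          exact (dd_measurable x hmeas 0).aestronglyMeasurable
        · exact (badf_measurable x hmeas q hN 0).aestronglyMeasurable
      · exact dd_integrable x hmeas hdist hmom 0
      · intro N
        filter_upwards with ω
        rw [Real.norm_eq_abs, abs_of_nonneg (badf_nonneg x g q N 0 ω)]
        exact badf_le_dd x g q N 0 ω
      · filter_upwards [hae1, hE2] with ω h1' h2'
        -- get a good time n ≥ 1
        have hbd : IsBoundedUnder (· ≤ ·) atTop (fun n : ℕ => am x g 0 n ω / n) := by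
          apply IsBoundedUnder.mono_le h2'.isBoundedUnder_le
          filter_upwards [eventually_ge_atTop 1] with n hn
          have hnpos : (0 : ℝ) < (n : ℝ) := by exact_mod_cast hn
          apply (div_le_div_iff_of_pos_right hnpos).2
          have h := am_le_sum hiso x g 0 n ω
          calc am x g 0 n ω ≤ ∑ i ∈ Finset.range n, dd x g (0 + i) ω := h
            _ = ∑ i ∈ Finset.range n, dd x g i ω := by
                apply Finset.sum_congr rfl
                intro i _
                rw [Nat.zero_add]
        have hcob : IsCoboundedUnder (· ≥ ·) atTop (fun n : ℕ => am x g 0 n ω / n) :=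
          hbd.isCoboundedUnder_flip
        have hfreq := frequently_lt_of_liminf_lt hcob h1'
        obtain ⟨n, hltn, hn1⟩ := (hfreq.and_eventually (eventually_ge_atTop 1)).exists
        have hnpos : (0 : ℝ) < (n : ℝ) := by exact_mod_cast hn1
        have hle : am x g 0 n ω ≤ n * q := by
          have := (div_lt_iff₀ hnpos).1 hltn
          nlinarith
        apply Filter.Tendsto.congr' _ tendsto_const_nhds
        filter_upwards [eventually_ge_atTop n] with N hN
        exact (if_pos ⟨n, hn1, hN, hle⟩).symm
    have hLq : L ≤ q := by
      have hev : ∀ᶠ N : ℕ in atTop, L - q ≤ β N := by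
        filter_upwards [eventually_ge_atTop 1] with N hN
        have := hβle N (by omega)
        linarith
      have h := ge_of_tendsto hβ0 hev
      linarith
    exact absurd hq (not_lt.2 hLq)
  have hlower : ∀ᵐ ω ∂P, L ≤ liminf (fun n : ℕ => am x g 0 n ω / n) atTop := by
    have hq : ∀ᵐ ω ∂P, ∀ qr : ℚ, (qr : ℝ) < L →
        ¬ (liminf (fun n : ℕ => am x g 0 n ω / n) atTop < (qr : ℝ)) := by
      rw [ae_all_iff]
      intro qr
      by_cases hqr : (qr : ℝ) < L
      · have := measure_eq_zero_iff_ae_notMem.1 (hkey qr hqr)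
        filter_upwards [this] with ω hω _
        simpa using hω
      · filter_upwards with ω h
        exact absurd h hqr
    filter_upwards [hq] with ω hω
    by_contra h
    push_neg at h
    obtain ⟨qr, h1, h2⟩ := exists_rat_btwn h
    exact hω qr h2 h1
  -- final assembly
  filter_upwards [hEY, hEZ, hE2, hlower] with ω hY hZ hS hl
  have hfeq : (fun n : ℕ => dist x ((((List.range n).map (fun i => g i ω)).prod) • x) / n)
      = fun n : ℕ => am x g 0 n ω / n := by
    funext n
    rw [wlk_eq_range g n ω]
    rfl
  rw [hfeq]
  apply tendsto_order.2
  constructor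
  · intro b hb
    have hbnd : IsBoundedUnder (· ≥ ·) atTop (fun n : ℕ => am x g 0 n ω / n) := by
      apply isBoundedUnder_of
      exact ⟨0, fun n => div_nonneg (am_nonneg x g 0 n ω) (Nat.cast_nonneg n)⟩
    exact eventually_lt_of_lt_liminf (lt_of_lt_of_le hb hl) hbnd
  · intro b hb
    -- choose a good block length k
    obtain ⟨k, hself⟩ := ((hLtend.eventually_lt_const (show L < (L + b) / 2 by linarith)).and
      (eventually_ge_atTop 1)).exists
    obtain ⟨hαk, hk1⟩ := hself
    have hkpos : 0 < k := by omega
    have hkR : (0 : ℝ) < (k : ℝ) := by exact_mod_cast hkpos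
    specialize hY k hkpos
    specialize hZ k hkpos
    set SY : ℕ → ℝ := fun Q => ∑ j ∈ Finset.range Q, am x g (j * k) k ω with hSY
    set Z : ℕ → ℝ := fun j => ∑ i : Fin k, dd x g (j * k + i) ω with hZdef
    have hZnn : ∀ j, 0 ≤ Z j := fun j => Finset.sum_nonneg fun i _ => dist_nonneg
    have hSYnn : ∀ Q, 0 ≤ SY Q := fun Q =>
      Finset.sum_nonneg fun j _ => am_nonneg x g (j * k) k ω
    -- Z q / q → 0
    have hZq : Tendsto (fun Q : ℕ => Z Q / Q) atTop (nhds 0) := by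
      have hz2 : Tendsto (fun Q : ℕ => (∑ j ∈ Finset.range (Q + 1), Z j) / ((Q + 1 : ℕ) : ℝ))
          atTop (nhds ((k : ℝ) * mbar)) := hZ.comp (tendsto_add_atTop_nat 1)
      have hone : Tendsto (fun Q : ℕ => ((Q + 1 : ℕ) : ℝ) / Q) atTop (nhds 1) := by
        have hone0 : Tendsto (fun Q : ℕ => 1 + 1 / (Q : ℝ)) atTop (nhds (1 + 0)) :=
          tendsto_const_nhds.add (Tendsto.div_atTop tendsto_const_nhds
            tendsto_natCast_atTop_atTop)
        rw [add_zero] at hone0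
        apply hone0.congr'
        filter_upwards [eventually_ge_atTop 1] with Q hQ
        have hQpos : (0 : ℝ) < (Q : ℝ) := by exact_mod_cast hQ
        push_cast
        field_simp
      have hz1 := (hz2.mul hone).sub hZ
      rw [show (k : ℝ) * mbar * 1 - (k : ℝ) * mbar = 0 by ring] at hz1
      apply hz1.congr'
      filter_upwards [eventually_ge_atTop 1] with Q hQ
      have hQpos : (0 : ℝ) < (Q : ℝ) := by exact_mod_cast hQ
      have hQ1pos : (0 : ℝ) < (Q : ℝ) + 1 := by linarith
      rw [Finset.sum_range_succ]
      push_cast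
      field_simp
      ring
    -- the averaged upper bound sequence
    have huq : Tendsto (fun Q : ℕ => (SY Q + Z Q) / ((Q : ℝ) * k)) atTop
        (nhds (α k / k)) := by
      have heq : ∀ Q : ℕ, (SY Q + Z Q) / ((Q : ℝ) * k) = (SY Q / Q) / k + (Z Q / Q) / k := by
        intro Q
        rw [div_div, div_div, ← add_div]
      simp only [heq]
      have h := (hY.div_const (k : ℝ)).add ((hZq).div_const (k : ℝ))
      rw [zero_div, add_zero] at h
      exact h
    have hub : ∀ᶠ Q in atTop, (SY Q + Z Q) / ((Q : ℝ) * k) < b := by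
      apply huq.eventually_lt_const
      calc α k / k < (L + b) / 2 := hαk
        _ < b := by linarith
    have hcomp := (tendsto_nat_div_atTop hkpos).eventually hub
    filter_upwards [hcomp, eventually_ge_atTop k] with n h1 h2
    set Q : ℕ := n / k with hQdef
    have hQ1 : 1 ≤ Q := (Nat.one_le_div_iff hkpos).2 h2
    have hQk : Q * k ≤ n := Nat.div_mul_le_self n k
    have hmod : n - Q * k < k := by
      have h1 : n % k < k := Nat.mod_lt n hkpos
      have h2 : Q * k + n % k = n := by
        rw [hQdef, Nat.mul_comm]
        exact Nat.div_add_mod n k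
      omega
    -- the pointwise chain
    have hchain : am x g 0 n ω ≤ SY Q + Z Q := by
      have hs1 : am x g 0 n ω ≤ am x g 0 (Q * k) ω + am x g (Q * k) (n - Q * k) ω := by
        have h := am_subadd hiso x g 0 (Q * k) (n - Q * k) ω
        rw [show Q * k + (n - Q * k) = n from by omega] at h
        rwa [Nat.zero_add] at h
      have hs2 : am x g 0 (Q * k) ω ≤ SY Q := am_block_le hiso x g k Q ω
      have hs3 : am x g (Q * k) (n - Q * k) ω ≤ Z Q := by
        have h := am_le_sum hiso x g (Q * k) (n - Q * k) ω
        have hsub2 : ∑ i ∈ Finset.range (n - Q * k), dd x g (Q * k + i) ω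
            ≤ ∑ i ∈ Finset.range k, dd x g (Q * k + i) ω :=
          Finset.sum_le_sum_of_subset_of_nonneg
            (Finset.range_subset_range.2 hmod.le) (fun i _ _ => dist_nonneg)
        have hfin : ∑ i ∈ Finset.range k, dd x g (Q * k + i) ω = Z Q :=
          (Fin.sum_univ_eq_sum_range (fun i => dd x g (Q * k + i) ω) k).symm
        calc am x g (Q * k) (n - Q * k) ω
            ≤ ∑ i ∈ Finset.range (n - Q * k), dd x g (Q * k + i) ω := h
          _ ≤ ∑ i ∈ Finset.range k, dd x g (Q * k + i) ω := hsub2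
          _ = Z Q := hfin
      linarith
    have hnR : (0 : ℝ) < (n : ℝ) := by
      have : 1 ≤ n := by omega
      exact_mod_cast this
    have hQkR : (0 : ℝ) < (Q : ℝ) * k := by
      have : (0:ℝ) < (Q:ℝ) := by exact_mod_cast hQ1
      positivity
    have hQkn : (Q : ℝ) * (k : ℝ) ≤ (n : ℝ) := by exact_mod_cast hQk
    calc am x g 0 n ω / n ≤ (SY Q + Z Q) / n := by
          exact (div_le_div_iff_of_pos_right hnR).2 hchain
      _ ≤ (SY Q + Z Q) / ((Q : ℝ) * k) := by
          exact div_le_div_of_nonneg_left (add_nonneg (hSYnn Q) (hZnn Q)) hQkR hQkn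
      _ < b := h1
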